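/- For k ≥ 1, consider the chained system AᵢXᵢBᵢ + CᵢXᵢ₊₁Dᵢ = Eᵢ for i = 1,…,k over ℂ. If the system is consistent, then for each i the rank equalities rank[[Aᵢ, Eᵢ],[0, Dᵢ]] = rank(Aᵢ) + rank(Dᵢ) and rank[[Bᵢ, 0],[Eᵢ, Cᵢ]] = rank(Bᵢ) + rank(Cᵢ) hold. -/

import Mathlib

open Matrix

-- range of prodMap
lemma myrange_prodMap {K M M' N N' : Type*} [Field K]
    [AddCommGroup M] [Module K M] [AddCommGroup M'] [Module K M']
    [AddCommGroup N] [Module K N] [AddCommGroup N'] [Module K N']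
    (f : M →ₗ[K] N) (g : M' →ₗ[K] N') :
    LinearMap.range (f.prodMap g) = (LinearMap.range f).prod (LinearMap.range g) := by
  ext ⟨x, y⟩
  constructor
  · rintro ⟨⟨u, w⟩, h⟩
    rw [LinearMap.prodMap_apply] at h
    exact ⟨⟨u, congrArg Prod.fst h⟩, ⟨w, congrArg Prod.snd h⟩⟩
  · rintro ⟨⟨u, hu⟩, ⟨w, hw⟩⟩
    exact ⟨(u, w), by simp [LinearMap.prodMap_apply, hu, hw]⟩

noncomputable def prodSubEquiv {K M N : Type*} [Field K]
    [AddCommGroup M] [Module K M] [AddCommGroup N] [Module K N]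
    (S : Submodule K M) (T : Submodule K N) : (S × T) ≃ₗ[K] (S.prod T) :=
  LinearEquiv.ofBijective
    (LinearMap.codRestrict (S.prod T) (S.subtype.prodMap T.subtype)
      (by rintro ⟨⟨x, hx⟩, ⟨y, hy⟩⟩; exact ⟨hx, hy⟩))
    (by
      constructor
      · intro x y h
        have h' := congrArg Subtype.val h
        exact Prod.ext (Subtype.ext (congrArg Prod.fst h')) (Subtype.ext (congrArg Prod.snd h'))
      · rintro ⟨⟨x, y⟩, hx, hy⟩
        exact ⟨(⟨x, hx⟩, ⟨y, hy⟩), rfl⟩)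

lemma finrank_prod_sub {K M N : Type*} [Field K]
    [AddCommGroup M] [Module K M] [AddCommGroup N] [Module K N]
    [FiniteDimensional K M] [FiniteDimensional K N]
    (S : Submodule K M) (T : Submodule K N) :
    Module.finrank K (S.prod T) = Module.finrank K S + Module.finrank K T := by
  rw [← (prodSubEquiv S T).finrank_eq, Module.finrank_prod]

lemma rank_fromBlocks_diag {a b c d : ℕ}
    (A : Matrix (Fin a) (Fin b) ℂ) (D : Matrix (Fin c) (Fin d) ℂ) :
    (fromBlocks A 0 0 D).rank = A.rank + D.rank := by
  classical
  have hlin : (fromBlocks A 0 0 D).mulVecLin =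
      ((LinearEquiv.sumArrowLequivProdArrow (Fin a) (Fin c) ℂ ℂ).symm.toLinearMap) ∘ₗ
      (A.mulVecLin.prodMap D.mulVecLin) ∘ₗ
      (LinearEquiv.sumArrowLequivProdArrow (Fin b) (Fin d) ℂ ℂ).toLinearMap := by
    apply LinearMap.ext
    intro v
    have hv : v = Sum.elim (v ∘ Sum.inl) (v ∘ Sum.inr) := (Sum.elim_comp_inl_inr v).symm
    simp only [Matrix.mulVecLin_apply, LinearMap.comp_apply, LinearEquiv.coe_coe,
      LinearEquiv.sumArrowLequivProdArrow, Equiv.sumArrowEquivProdArrow,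
      LinearEquiv.coe_symm_mk, LinearEquiv.coe_mk, Equiv.coe_fn_mk, Equiv.coe_fn_symm_mk,
      LinearMap.prodMap_apply]
    conv_lhs => rw [hv]
    rw [fromBlocks_mulVec]
    simp
  rw [Matrix.rank, Matrix.rank, Matrix.rank, hlin, LinearMap.range_comp,
    LinearMap.range_comp_of_range_eq_top _ (LinearEquiv.range _), myrange_prodMap,
    LinearEquiv.finrank_map_eq, finrank_prod_sub]

theorem chained_sylvester_necessary_ranks_two
    (k : ℕ) (hk : 1 ≤ k)
    (m n : Fin k → ℕ) (p q : Fin (k + 1) → ℕ)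
    (A : ∀ i : Fin k, Matrix (Fin (m i)) (Fin (p i.castSucc)) ℂ)
    (B : ∀ i : Fin k, Matrix (Fin (q i.castSucc)) (Fin (n i)) ℂ)
    (C : ∀ i : Fin k, Matrix (Fin (m i)) (Fin (p i.succ)) ℂ)
    (D : ∀ i : Fin k, Matrix (Fin (q i.succ)) (Fin (n i)) ℂ)
    (E : ∀ i : Fin k, Matrix (Fin (m i)) (Fin (n i)) ℂ)
    (X : ∀ j : Fin (k + 1), Matrix (Fin (p j)) (Fin (q j)) ℂ)
    (hX : ∀ i : Fin k, A i * X i.castSucc * B i + C i * X i.succ * D i = E i) :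
    ∀ i : Fin k,
      (Matrix.fromBlocks (A i) (E i) 0 (D i)).rank = (A i).rank + (D i).rank ∧
      (Matrix.fromBlocks (B i) 0 (E i) (C i)).rank = (B i).rank + (C i).rank := by
  intro i
  have hE := hX i
  constructor
  · have hfac : Matrix.fromBlocks (A i) (E i) 0 (D i) =
        (Matrix.fromBlocks 1 (C i * X i.succ) 0 1 :
            Matrix (Fin (m i) ⊕ Fin (q i.succ)) (Fin (m i) ⊕ Fin (q i.succ)) ℂ) *
          Matrix.fromBlocks (A i) 0 0 (D i) *
          (Matrix.fromBlocks 1 (X i.castSucc * B i) 0 1 :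
            Matrix (Fin (p i.castSucc) ⊕ Fin (n i)) (Fin (p i.castSucc) ⊕ Fin (n i)) ℂ) := by
      rw [Matrix.fromBlocks_multiply, Matrix.fromBlocks_multiply]
      simp [Matrix.mul_assoc, ← hE]
    rw [hfac,
      Matrix.rank_mul_eq_left_of_isUnit_det _ _
        (by rw [Matrix.det_fromBlocks_zero₂₁]; simp),
      Matrix.rank_mul_eq_right_of_isUnit_det _ _
        (by rw [Matrix.det_fromBlocks_zero₂₁]; simp),
      rank_fromBlocks_diag]
  · have hfac : Matrix.fromBlocks (B i) 0 (E i) (C i) =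
        (Matrix.fromBlocks 1 0 (A i * X i.castSucc) 1 :
            Matrix (Fin (q i.castSucc) ⊕ Fin (m i)) (Fin (q i.castSucc) ⊕ Fin (m i)) ℂ) *
          Matrix.fromBlocks (B i) 0 0 (C i) *
          (Matrix.fromBlocks 1 0 (X i.succ * D i) 1 :
            Matrix (Fin (n i) ⊕ Fin (p i.succ)) (Fin (n i) ⊕ Fin (p i.succ)) ℂ) := by
      rw [Matrix.fromBlocks_multiply, Matrix.fromBlocks_multiply]
      simp [Matrix.mul_assoc, ← hE]
    rw [hfac,
      Matrix.rank_mul_eq_left_of_isUnit_det _ _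
        (by rw [Matrix.det_fromBlocks_zero₁₂]; simp),
      Matrix.rank_mul_eq_right_of_isUnit_det _ _
        (by rw [Matrix.det_fromBlocks_zero₁₂]; simp),
      rank_fromBlocks_diag]
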